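/- For the cycle graph C_n on n ≥ 3 vertices: a_1(C_n) = 0, a_k(C_n) = n for every k with 2 ≤ k ≤ n − 1, and a_n(C_n) = 1. Equivalently, a(C_n; x) = n·Σ_{i=2}^{n−1} x^i + x^n. -/

import Mathlib

open SimpleGraph Polynomial Finset

/-- `δ_S(v)`: the number of neighbors of `v` lying in the set `S`. -/
noncomputable def degIn {V : Type*} (G : SimpleGraph V) (S : Finset V) (v : V) : ℕ :=
  ((S : Set V) ∩ G.neighborSet v).ncard

/-- `δ(v)`: the degree of `v` in `G`. -/
noncomputable def degOf {V : Type*} (G : SimpleGraph V) (v : V) : ℕ :=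
  (G.neighborSet v).ncard

/-- `S` is a strong defensive alliance in `G`: `S` is nonempty and every `v ∈ S`
satisfies `2·δ_S(v) ≥ δ(v)`. -/
def IsStrongAlliance {V : Type*} (G : SimpleGraph V) (S : Finset V) : Prop :=
  S.Nonempty ∧ ∀ v ∈ S, degOf G v ≤ 2 * degIn G S v

/-- The alliances counted by the strong alliance polynomial: strong defensive alliances
whose induced subgraph is connected. -/
def IsCountedAlliance {V : Type*} (G : SimpleGraph V) (S : Finset V) : Prop :=
  IsStrongAlliance G S ∧ (G.induce (S : Set V)).Connected

/-- `a_k(G)`: the number of strong defensive alliances of cardinality `k` in `G`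
whose induced subgraph is connected. -/
noncomputable def aCoeff {V : Type*} (G : SimpleGraph V) (k : ℕ) : ℕ :=
  {S : Finset V | S.card = k ∧ IsCountedAlliance G S}.ncard

/-- The strong alliance polynomial `a(G;x) = Σ_k a_k(G) x^k`. -/
noncomputable def alliancePoly {V : Type*} [Fintype V] (G : SimpleGraph V) : Polynomial ℤ :=
  ∑ k ∈ Finset.range (Fintype.card V + 1), Polynomial.C (aCoeff G k : ℤ) * Polynomial.X ^ k

open Fin.NatCast Fin.CommRing

section Cycle

variable {m : ℕ}

lemma myOneNeZero : (1 : Fin (m+3)) ≠ 0 := by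
  intro h; have := congrArg Fin.val h; simp at this

lemma myTwoNeZero : (2 : Fin (m+3)) ≠ 0 := by
  have : ((2:ℕ) : Fin (m+3)) ≠ 0 := by
    intro h
    have := congrArg Fin.val h
    rw [Fin.val_cast_of_lt (by omega)] at this
    simp at this
  simpa using this

lemma adj_iff' {u v : Fin (m+3)} :
    (cycleGraph (m+3)).Adj u v ↔ v = u + 1 ∨ v = u - 1 := by
  rw [(cycleGraph_adj : (cycleGraph ((m+1)+2)).Adj u v ↔ _)]
  constructor
  · rintro (h|h)
    · right; linear_combination -h
    · left; linear_combination h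
  · rintro (h|h)
    · right; linear_combination h
    · left; linear_combination -h

lemma nbhd (v : Fin (m+3)) :
    (cycleGraph (m+3)).neighborSet v = {v - 1, v + 1} :=
  (cycleGraph_neighborSet : (cycleGraph ((m+1)+2)).neighborSet v = _)

lemma degOf_cycle (v : Fin (m+3)) : degOf (cycleGraph (m+3)) v = 2 := by
  unfold degOf
  rw [nbhd, Set.ncard_pair]
  intro h
  exact myTwoNeZero (m := m) (by linear_combination -h)

lemma strong_iff (S : Finset (Fin (m+3))) :
    IsStrongAlliance (cycleGraph (m+3)) S ↔
      S.Nonempty ∧ ∀ v ∈ S, v - 1 ∈ S ∨ v + 1 ∈ S := by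
  unfold IsStrongAlliance
  refine and_congr_right fun _ => forall₂_congr fun v hv => ?_
  rw [degOf_cycle]
  unfold degIn
  rw [nbhd]
  constructor
  · intro h
    have hpos : 0 < ((S : Set (Fin (m+3))) ∩ {v - 1, v + 1}).ncard := by omega
    rw [Set.ncard_pos (Set.toFinite _)] at hpos
    obtain ⟨x, hxS, hx⟩ := hpos
    rcases hx with rfl | rfl
    · exact Or.inl hxS
    · exact Or.inr hxS
  · intro h
    have : 1 ≤ ((S : Set (Fin (m+3))) ∩ {v - 1, v + 1}).ncard := by
      rw [Nat.one_le_iff_ne_zero, ← Nat.pos_iff_ne_zero, Set.ncard_pos (Set.toFinite _)]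
      rcases h with h | h
      · exact ⟨v - 1, h, Or.inl rfl⟩
      · exact ⟨v + 1, h, Or.inr rfl⟩
    omega

def arc (j : Fin (m+3)) (k : ℕ) : Finset (Fin (m+3)) :=
  (Finset.range k).image (fun i : ℕ => j + (i : Fin (m+3)))

lemma mem_arc {j v : Fin (m+3)} {k : ℕ} :
    v ∈ arc j k ↔ ∃ i < k, j + (i : Fin (m+3)) = v := by
  simp [arc]

lemma self_mem_arc {j : Fin (m+3)} {k : ℕ} (hk : 1 ≤ k) : j ∈ arc j k :=
  mem_arc.mpr ⟨0, hk, by simp⟩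

lemma card_arc (j : Fin (m+3)) {k : ℕ} (hk : k ≤ m + 3) : (arc j k).card = k := by
  rw [arc, Finset.card_image_of_injOn, Finset.card_range]
  intro a ha b hb hab
  simp only [Finset.coe_range, Set.mem_Iio] at ha hb
  have h1 : ((a : Fin (m+3))) = b := by
    have := hab
    simpa using this
  have := congrArg Fin.val h1
  rwa [Fin.val_cast_of_lt (by omega), Fin.val_cast_of_lt (by omega)] at this

lemma sub_one_not_mem_arc {j : Fin (m+3)} {k : ℕ} (hk : k ≤ m + 2) :
    j - 1 ∉ arc j k := by
  intro h
  obtain ⟨i, hi, hji⟩ := mem_arc.mp h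
  have h2 : (i : Fin (m+3)) = ((m + 2 : ℕ) : Fin (m+3)) := by
    have hm : ((m + 3 : ℕ) : Fin (m+3)) = 0 := by
      simp [Fin.ext_iff, Fin.val_cast_of_lt]
    push_cast at hm ⊢
    linear_combination hji - hm
  have := congrArg Fin.val h2
  rw [Fin.val_cast_of_lt (by omega), Fin.val_cast_of_lt (by omega)] at this
  omega

lemma walk_closed {V : Type*} {G : SimpleGraph V} {S A : Set V}
    (hA : ∀ a ∈ A, ∀ b : S, G.Adj a ↑b → ↑b ∈ A) :
    ∀ {x y : ↥S} (_ : (G.induce S).Walk x y), ↑x ∈ A → ↑y ∈ A := by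
  intro x y w
  induction w with
  | nil => exact id
  | cons ha p ih => exact fun hx => ih (hA _ hx _ ha)

lemma induce_arc_connected (j : Fin (m+3)) {k : ℕ} (hk : 1 ≤ k) :
    ((cycleGraph (m+3)).induce (arc j k : Set (Fin (m+3)))).Connected := by
  have hj : j ∈ arc j k := self_mem_arc hk
  rw [connected_iff]
  refine ⟨?_, ⟨⟨j, hj⟩⟩⟩
  have key : ∀ i (hi : i < k),
      ((cycleGraph (m+3)).induce (arc j k : Set (Fin (m+3)))).Reachable ⟨j, hj⟩
        ⟨j + (i : Fin (m+3)), by exact mem_arc.mpr ⟨i, hi, rfl⟩⟩ := by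
    intro i
    induction i with
    | zero => intro _; exact Reachable.refl _ |>.mono le_rfl |>.trans (by
        have : (⟨j, hj⟩ : ↥(arc j k : Set (Fin (m+3)))) = ⟨j + ((0:ℕ) : Fin (m+3)), mem_arc.mpr ⟨0, hk, rfl⟩⟩ := by
          ext; simp
        rw [← this])
    | succ i ih =>
      intro hi
      have hi' : i < k := by omega
      refine (ih hi').trans ?_
      refine Adj.reachable ?_
      show (cycleGraph (m+3)).Adj (j + (i : Fin (m+3))) (j + ((i+1 : ℕ) : Fin (m+3)))
      rw [adj_iff']
      left
      push_cast
      ring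
  rintro ⟨x, hx⟩ ⟨y, hy⟩
  obtain ⟨i, hi, rfl⟩ := mem_arc.mp hx
  obtain ⟨i', hi', rfl⟩ := mem_arc.mp hy
  exact (key i hi).symm.trans (key i' hi')

lemma arc_counted (j : Fin (m+3)) {k : ℕ} (h2 : 2 ≤ k) :
    IsCountedAlliance (cycleGraph (m+3)) (arc j k) := by
  refine ⟨(strong_iff _).mpr ⟨⟨j, self_mem_arc (by omega)⟩, ?_⟩,
    induce_arc_connected j (by omega)⟩
  intro v hv
  obtain ⟨i, hi, rfl⟩ := mem_arc.mp hv
  by_cases hik : i + 1 < k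
  · right
    refine mem_arc.mpr ⟨i + 1, hik, ?_⟩
    push_cast; ring
  · left
    have hi1 : 1 ≤ i := by omega
    refine mem_arc.mpr ⟨i - 1, by omega, ?_⟩
    have : ((i - 1 : ℕ) : Fin (m+3)) = (i : Fin (m+3)) - 1 := by
      push_cast [Nat.cast_sub hi1]; ring
    rw [this]; ring

end Cycle

section Cycle2
variable {m : ℕ}
open Classical in
lemma connected_eq_arc (S : Finset (Fin (m+3))) (hS : S.Nonempty) (hne : S ≠ Finset.univ)
    (hc : ((cycleGraph (m+3)).induce (S : Set (Fin (m+3)))).Connected) :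
    ∃ j, S = arc j S.card := by
  obtain ⟨v, hv⟩ : ∃ v, v ∉ S := by
    by_contra h
    push_neg at h
    exact hne (Finset.eq_univ_of_forall h)
  obtain ⟨s, hs⟩ := hS
  -- first member after v
  have hP : ∃ t : ℕ, v + (t : Fin (m+3)) ∈ S := by
    refine ⟨(s - v).val, ?_⟩
    rwa [Fin.cast_val_eq_self, add_sub_cancel]
  set M := Nat.find hP with hMdef
  have hM : v + (M : Fin (m+3)) ∈ S := Nat.find_spec hP
  have hM1 : 1 ≤ M := by
    rcases Nat.eq_zero_or_pos M with h0 | h0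
    · exfalso; rw [h0] at hM; simp at hM; exact hv hM
    · exact h0
  have hMle : M ≤ m + 2 := by
    have h1 : M ≤ (s - v).val := Nat.find_min' hP (by rwa [Fin.cast_val_eq_self, add_sub_cancel])
    have := (s - v).isLt
    omega
  set j := v + (M : Fin (m+3)) with hjdef
  have hj1 : j - 1 ∉ S := by
    have : j - 1 = v + ((M - 1 : ℕ) : Fin (m+3)) := by
      rw [hjdef, Nat.cast_sub hM1]
      push_cast
      ring
    rw [this]
    exact Nat.find_min hP (by omega)
  -- last member from j
  have hQ : ∃ t : ℕ, j + (t : Fin (m+3)) ∉ S := by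
    refine ⟨(m + 3) - M, ?_⟩
    have : j + (((m+3) - M : ℕ) : Fin (m+3)) = v := by
      rw [hjdef, Nat.cast_sub (by omega)]
      have : ((m + 3 : ℕ) : Fin (m+3)) = 0 := by simp [Fin.ext_iff, Fin.val_cast_of_lt]
      rw [this]
      ring
    rwa [this]
  set T := Nat.find hQ with hTdef
  have hT : j + (T : Fin (m+3)) ∉ S := Nat.find_spec hQ
  have hTS : ∀ i < T, j + (i : Fin (m+3)) ∈ S := by
    intro i hi
    by_contra h
    exact absurd (Nat.find_min hQ hi) (by simpa using h)
  have hT1 : 1 ≤ T := by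
    rcases Nat.eq_zero_or_pos T with h0 | h0
    · exfalso; rw [h0] at hT; simp at hT; exact hT hM
    · exact h0
  have hTle : T ≤ m + 2 := by
    have : T ≤ (m + 3) - M := Nat.find_min' hQ <| by
      have h1 : j + (((m+3) - M : ℕ) : Fin (m+3)) = v := by
        rw [hjdef, Nat.cast_sub (by omega)]
        have h2 : ((m + 3 : ℕ) : Fin (m+3)) = 0 := by simp [Fin.ext_iff, Fin.val_cast_of_lt]
        rw [h2]
        ring
      rwa [h1]
    omega
  have hjS : j ∈ S := hM
  have harc_sub : arc j T ⊆ S := by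
    intro x hx
    obtain ⟨i, hi, rfl⟩ := mem_arc.mp hx
    exact hTS i hi
  have hsub_arc : (S : Set (Fin (m+3))) ⊆ (arc j T : Set (Fin (m+3))) := by
    intro b hb
    have hreach := hc.preconnected ⟨j, hjS⟩ ⟨b, hb⟩
    obtain ⟨w⟩ := hreach
    refine walk_closed (A := (arc j T : Set (Fin (m+3)))) ?_ w (self_mem_arc hT1)
    rintro a ha ⟨c, hcS⟩ hadj
    obtain ⟨i, hi, rfl⟩ := mem_arc.mp ha
    rcases adj_iff'.mp hadj with rfl | rfl
    · -- c = (j + i) + 1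
      by_cases hik : i + 1 < T
      · refine mem_arc.mpr ⟨i + 1, hik, ?_⟩
        push_cast; ring
      · exfalso
        have : i + 1 = T := by omega
        have : j + (i : Fin (m+3)) + 1 = j + (T : Fin (m+3)) := by
          rw [← this]; push_cast; ring
        rw [this] at hcS
        exact hT hcS
    · -- c = (j + i) - 1
      by_cases hi0 : 1 ≤ i
      · refine mem_arc.mpr ⟨i - 1, by omega, ?_⟩
        rw [Nat.cast_sub hi0]
        push_cast
        ring
      · exfalso
        have hi0' : i = 0 := by omega
        have : j + (i : Fin (m+3)) - 1 = j - 1 := by rw [hi0']; push_cast; ring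
        rw [this] at hcS
        exact hj1 hcS
  have hSeq : S = arc j T := by
    apply Finset.Subset.antisymm _ harc_sub
    intro x hx
    exact hsub_arc hx
  refine ⟨j, ?_⟩
  rw [hSeq, card_arc j (by omega)]

lemma arc_injective {k : ℕ} (h1 : 1 ≤ k) (hk : k ≤ m + 2) :
    Function.Injective (fun j : Fin (m+3) => arc j k) := by
  intro j j' h
  simp only at h
  have hj : j ∈ arc j' k := h ▸ self_mem_arc h1
  obtain ⟨i, hi, hji⟩ := mem_arc.mp hj
  rcases Nat.eq_zero_or_pos i with h0 | h0
  · rw [h0] at hji; simpa using hji.symm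
  · exfalso
    have : j - 1 ∈ arc j' k := by
      refine mem_arc.mpr ⟨i - 1, by omega, ?_⟩
      rw [Nat.cast_sub h0, ← hji]
      push_cast
      ring
    rw [← h] at this
    exact sub_one_not_mem_arc hk this

lemma arc_univ : arc (0 : Fin (m+3)) (m+3) = Finset.univ := by
  apply Finset.eq_univ_of_forall
  intro v
  exact mem_arc.mpr ⟨v.val, v.isLt, by simp [Fin.cast_val_eq_self]⟩

end Cycle2

section Count
variable {m : ℕ}

lemma counted_set_eq {k : ℕ} (h2 : 2 ≤ k) (hk : k ≤ m + 2) :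
    {S : Finset (Fin (m+3)) | S.card = k ∧ IsCountedAlliance (cycleGraph (m+3)) S}
      = ↑(Finset.univ.image (fun j : Fin (m+3) => arc j k)) := by
  ext S
  simp only [Set.mem_setOf_eq, Finset.coe_image, Finset.coe_univ, Set.image_univ,
    Set.mem_range]
  constructor
  · rintro ⟨hcard, hstrong, hconn⟩
    have hne : S ≠ Finset.univ := by
      intro h
      rw [h, Finset.card_univ, Fintype.card_fin] at hcard
      omega
    obtain ⟨j, hj⟩ := connected_eq_arc S hstrong.1 hne hconn
    rw [hcard] at hj
    exact ⟨j, hj.symm⟩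
  · rintro ⟨j, rfl⟩
    exact ⟨card_arc j (by omega), arc_counted j h2⟩

lemma aCoeff_mid {k : ℕ} (h2 : 2 ≤ k) (hk : k ≤ m + 2) :
    aCoeff (cycleGraph (m+3)) k = m + 3 := by
  unfold aCoeff
  rw [counted_set_eq h2 hk, Set.ncard_coe_finset,
    Finset.card_image_of_injective _ (arc_injective (by omega) hk),
    Finset.card_univ, Fintype.card_fin]

lemma aCoeff_zero' : aCoeff (cycleGraph (m+3)) 0 = 0 := by
  unfold aCoeff
  have hempty : {S : Finset (Fin (m+3)) | S.card = 0 ∧ IsCountedAlliance (cycleGraph (m+3)) S} = ∅ := by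
    ext S
    simp only [Set.mem_setOf_eq, Set.mem_empty_iff_false, iff_false, not_and]
    rintro hcard ⟨⟨hne, _⟩, _⟩
    rw [Finset.card_eq_zero] at hcard
    exact hne.ne_empty hcard
  rw [hempty, Set.ncard_empty]

lemma aCoeff_one' : aCoeff (cycleGraph (m+3)) 1 = 0 := by
  unfold aCoeff
  have hempty : {S : Finset (Fin (m+3)) | S.card = 1 ∧ IsCountedAlliance (cycleGraph (m+3)) S} = ∅ := by
    ext S
    simp only [Set.mem_setOf_eq, Set.mem_empty_iff_false, iff_false, not_and]
    rintro hcard ⟨hstrong, _⟩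
    obtain ⟨v, rfl⟩ := Finset.card_eq_one.mp hcard
    obtain ⟨-, h⟩ := (strong_iff _).mp hstrong
    rcases h v (Finset.mem_singleton_self v) with h | h <;>
      rw [Finset.mem_singleton] at h
    · exact myOneNeZero (m := m) (by linear_combination -h)
    · exact myOneNeZero (m := m) (by linear_combination h)
  rw [hempty, Set.ncard_empty]

lemma aCoeff_top' : aCoeff (cycleGraph (m+3)) (m+3) = 1 := by
  unfold aCoeff
  have : {S : Finset (Fin (m+3)) | S.card = m + 3 ∧ IsCountedAlliance (cycleGraph (m+3)) S}
      = {Finset.univ} := by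
    ext S
    simp only [Set.mem_setOf_eq, Set.mem_singleton_iff]
    constructor
    · rintro ⟨hcard, -⟩
      apply Finset.eq_univ_of_card
      rw [hcard, Fintype.card_fin]
    · rintro rfl
      refine ⟨by rw [Finset.card_univ, Fintype.card_fin], ?_⟩
      rw [← arc_univ]
      exact arc_counted 0 (by omega)
  rw [this, Set.ncard_singleton]

end Count

/-- For the cycle graph `C_n` on `n ≥ 3` vertices: `a_1(C_n) = 0`,
`a_k(C_n) = n` for `2 ≤ k ≤ n − 1`, `a_n(C_n) = 1`, and
`a(C_n;x) = n·Σ_{i=2}^{n−1} x^i + x^n`. -/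
theorem stmt_9 (n : ℕ) (hn : 3 ≤ n) :
    aCoeff (SimpleGraph.cycleGraph n) 1 = 0 ∧
    (∀ k : ℕ, 2 ≤ k → k ≤ n - 1 → aCoeff (SimpleGraph.cycleGraph n) k = n) ∧
    aCoeff (SimpleGraph.cycleGraph n) n = 1 ∧
    alliancePoly (SimpleGraph.cycleGraph n) =
      Polynomial.C (n : ℤ) * ∑ i ∈ Finset.Icc 2 (n - 1), Polynomial.X ^ i
        + Polynomial.X ^ n := by
  obtain ⟨m, rfl⟩ : ∃ m, n = m + 3 := ⟨n - 3, by omega⟩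
  have hmid : ∀ k : ℕ, 2 ≤ k → k ≤ m + 2 → aCoeff (cycleGraph (m+3)) k = m + 3 :=
    fun k h2 hk => aCoeff_mid h2 hk
  refine ⟨aCoeff_one', fun k h2 hk => hmid k h2 (by omega), aCoeff_top', ?_⟩
  unfold alliancePoly
  rw [Fintype.card_fin]
  have hrange : Finset.range (m + 3 + 1)
      = insert 0 (insert 1 (insert (m+3) (Finset.Icc 2 (m+2)))) := by
    ext x
    simp only [Finset.mem_range, Finset.mem_insert, Finset.mem_Icc]
    omega
  rw [hrange, Finset.sum_insert (by simp), Finset.sum_insert (by simp),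
    Finset.sum_insert (by simp)]
  rw [aCoeff_zero', aCoeff_one', aCoeff_top']
  have hmid_sum : ∑ k ∈ Finset.Icc 2 (m+2), Polynomial.C ((aCoeff (cycleGraph (m+3)) k : ℤ))
        * Polynomial.X ^ k
      = Polynomial.C ((m + 3 : ℕ) : ℤ) * ∑ i ∈ Finset.Icc 2 (m+2), Polynomial.X ^ i := by
    rw [Finset.mul_sum]
    refine Finset.sum_congr rfl ?_
    intro k hk
    rw [Finset.mem_Icc] at hk
    rw [hmid k hk.1 hk.2]
  rw [hmid_sum]
  have : (m + 3 : ℕ) - 1 = m + 2 := rfl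
  rw [this]
  push_cast
  simp only [Polynomial.C_0, Polynomial.C_1]
  ring
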